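/- Let Φ̃₁, Φ̃₂ ∈ L²(ℝ³,ℂ²) with ‖Φ̃₁‖_{L²} = ‖Φ̃₂‖_{L²} = 1, let u, v : ℝ³ → ℝ be measurable, and suppose ⟨Φ̃₁ | Φ̃₂ e^{iu}⟩ = 0, ⟨Φ̃₁ | Φ̃₁ e^{iv}⟩ = 0, ⟨Φ̃₁ | Φ̃₂ e^{i(u+v)}⟩ = 0, ⟨Φ̃₂ e^{iu} | Φ̃₁ e^{iv}⟩ = 0, and ⟨Φ̃₂ | Φ̃₂ e^{iv}⟩ = 0, where ⟨·|·⟩ is the L²(ℝ³,ℂ²) inner product. Let m^↑, m^↓ ≥ 0 with m^↑ + m^↓ = 2, and define Φ₁ := (1/√2)(√(m^↑) Φ̃₁ + √(m^↓) Φ̃₂ e^{iu}) and Φ₂ := (1/√2)(√(m^↑) Φ̃₁ − √(m^↓) Φ̃₂ e^{iu}) e^{iv}. Then {Φ₁, Φ₂} is an L²-orthonormal family and Φ₁(r)Φ₁(r)^* + Φ₂(r)Φ₂(r)^* = m^↑ Φ̃₁(r)Φ̃₁(r)^* + m^↓ Φ̃₂(r)Φ̃₂(r)^* for a.e. r ∈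 ℝ³. -/

import Mathlib

open MeasureTheory Complex
open scoped ComplexConjugate

noncomputable section

abbrev R3 : Type := EuclideanSpace ℝ (Fin 3)

lemma my_int_mul {f g : R3 → ℂ} (hf : MemLp f 2 volume) (hg : MemLp g 2 volume) :
    Integrable (fun x => conj (f x) * g x) volume := by
  have hcf : MemLp (fun x => conj (f x)) 2 volume :=
    hf.of_le (Complex.continuous_conj.comp_aestronglyMeasurable hf.1)
      (Filter.Eventually.of_forall fun x => by simp)
  have h : MemLp ((fun x => conj (f x)) • g) 1 volume :=
    hg.smul hcf
  have := memLp_one_iff_integrable.mp h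
  exact this

lemma my_int_mul_phase {f g : R3 → ℂ} (hf : MemLp f 2 volume) (hg : MemLp g 2 volume)
    (p : R3 → ℂ) (hp : AEStronglyMeasurable p volume) (hbd : ∀ x, ‖p x‖ ≤ 1) :
    Integrable (fun x => conj (f x) * (g x * p x)) volume := by
  have h := (my_int_mul hf hg).bdd_mul hp (Filter.Eventually.of_forall hbd)
  exact h.congr (Filter.Eventually.of_forall fun x => by ring)

lemma my_int_conj {f : R3 → ℂ} (h : Integrable f volume) :
    Integrable (fun x => conj (f x)) volume :=
  ⟨Complex.continuous_conj.comp_aestronglyMeasurable h.1, by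
    simpa [HasFiniteIntegral] using h.2⟩

lemma my_norm_phase (r : ℝ) : ‖Complex.exp (Complex.I * (r : ℂ))‖ = 1 := by
  rw [Complex.norm_exp]
  simp

lemma my_conj_exp (r : ℝ) :
    (starRingEnd ℂ) (Complex.exp (Complex.I * (r : ℂ))) =
      (Complex.exp (Complex.I * (r : ℂ)))⁻¹ := by
  rw [← Complex.exp_conj, ← Complex.exp_neg]
  congr 1
  simp [map_mul, Complex.conj_I]

/-- the Lazarev–Lieb phase construction producing two
orthonormal orbitals `Φ₁, Φ₂` out of two normalized orbitals `Φ̃₁, Φ̃₂` and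
phases `u, v`, with `Φ₁Φ₁* + Φ₂Φ₂* = m^↑ Φ̃₁Φ̃₁* + m^↓ Φ̃₂Φ̃₂*` a.e. -/
theorem stmt15 (Ψ₁ Ψ₂ : R3 → Fin 2 → ℂ)
    (hΨ₁ : ∀ s, MemLp (fun x => Ψ₁ x s) 2 volume)
    (hΨ₂ : ∀ s, MemLp (fun x => Ψ₂ x s) 2 volume)
    (hn₁ : (∫ x, ∑ s : Fin 2, Complex.normSq (Ψ₁ x s)) = 1)
    (hn₂ : (∫ x, ∑ s : Fin 2, Complex.normSq (Ψ₂ x s)) = 1)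
    (u v : R3 → ℝ) (hu : Measurable u) (hv : Measurable v)
    (hip₁ : (∫ x, ∑ s : Fin 2,
      conj (Ψ₁ x s) * (Ψ₂ x s * Complex.exp (Complex.I * (u x : ℂ)))) = 0)
    (hip₂ : (∫ x, ∑ s : Fin 2,
      conj (Ψ₁ x s) * (Ψ₁ x s * Complex.exp (Complex.I * (v x : ℂ)))) = 0)
    (hip₃ : (∫ x, ∑ s : Fin 2,
      conj (Ψ₁ x s) * (Ψ₂ x s * Complex.exp (Complex.I * ((u x : ℂ) + (v x : ℂ))))) = 0)
    (hip₄ : (∫ x, ∑ s : Fin 2,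
      conj (Ψ₂ x s * Complex.exp (Complex.I * (u x : ℂ))) *
        (Ψ₁ x s * Complex.exp (Complex.I * (v x : ℂ)))) = 0)
    (hip₅ : (∫ x, ∑ s : Fin 2,
      conj (Ψ₂ x s) * (Ψ₂ x s * Complex.exp (Complex.I * (v x : ℂ)))) = 0)
    (mu md : ℝ) (hmu : 0 ≤ mu) (hmd : 0 ≤ md) (hm : mu + md = 2)
    (Φ₁ Φ₂ : R3 → Fin 2 → ℂ)
    (hΦ₁ : Φ₁ = fun x s => ((Real.sqrt 2 : ℝ) : ℂ)⁻¹ *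
      (((Real.sqrt mu : ℝ) : ℂ) * Ψ₁ x s +
        ((Real.sqrt md : ℝ) : ℂ) * (Ψ₂ x s * Complex.exp (Complex.I * (u x : ℂ)))))
    (hΦ₂ : Φ₂ = fun x s => ((Real.sqrt 2 : ℝ) : ℂ)⁻¹ *
      (((Real.sqrt mu : ℝ) : ℂ) * Ψ₁ x s -
        ((Real.sqrt md : ℝ) : ℂ) * (Ψ₂ x s * Complex.exp (Complex.I * (u x : ℂ)))) *
        Complex.exp (Complex.I * (v x : ℂ))) :
    (∫ x, ∑ s : Fin 2, conj (Φ₁ x s) * Φ₁ x s) = 1 ∧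
    (∫ x, ∑ s : Fin 2, conj (Φ₂ x s) * Φ₂ x s) = 1 ∧
    (∫ x, ∑ s : Fin 2, conj (Φ₁ x s) * Φ₂ x s) = 0 ∧
    (∀ᵐ x ∂(volume : Measure R3), ∀ a b : Fin 2,
      Φ₁ x a * conj (Φ₁ x b) + Φ₂ x a * conj (Φ₂ x b) =
        (mu : ℂ) * (Ψ₁ x a * conj (Ψ₁ x b)) + (md : ℂ) * (Ψ₂ x a * conj (Ψ₂ x b))) := by
  set c : ℂ := ((Real.sqrt 2 : ℝ) : ℂ)⁻¹ with hc
  set a : ℂ := ((Real.sqrt mu : ℝ) : ℂ) with ha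
  set b : ℂ := ((Real.sqrt md : ℝ) : ℂ) with hb
  have h2 : ((Real.sqrt 2 : ℝ) : ℂ) * ((Real.sqrt 2 : ℝ) : ℂ) = 2 := by
    rw [← Complex.ofReal_mul, Real.mul_self_sqrt (by norm_num : (0:ℝ) ≤ 2)]
    norm_num
  have hcc : c * c = (2 : ℂ)⁻¹ := by rw [hc, ← mul_inv, h2]
  have haa : a * a = (mu : ℂ) := by
    rw [ha, ← Complex.ofReal_mul, Real.mul_self_sqrt hmu]
  have hbb : b * b = (md : ℂ) := by
    rw [hb, ← Complex.ofReal_mul, Real.mul_self_sqrt hmd]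
  -- building-block functions
  set T₁ : R3 → ℂ := fun x => ∑ s : Fin 2, conj (Ψ₁ x s) * Ψ₁ x s with hT₁
  set T₂ : R3 → ℂ := fun x => ∑ s : Fin 2, conj (Ψ₂ x s) * Ψ₂ x s with hT₂
  set g₁ : R3 → ℂ := fun x => ∑ s : Fin 2,
    conj (Ψ₁ x s) * (Ψ₂ x s * Complex.exp (Complex.I * (u x : ℂ))) with hg₁
  set g₂ : R3 → ℂ := fun x => ∑ s : Fin 2,
    conj (Ψ₁ x s) * (Ψ₁ x s * Complex.exp (Complex.I * (v x : ℂ))) with hg₂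
  set g₃ : R3 → ℂ := fun x => ∑ s : Fin 2,
    conj (Ψ₁ x s) * (Ψ₂ x s * Complex.exp (Complex.I * ((u x : ℂ) + (v x : ℂ)))) with hg₃
  set g₄ : R3 → ℂ := fun x => ∑ s : Fin 2,
    conj (Ψ₂ x s * Complex.exp (Complex.I * (u x : ℂ))) *
      (Ψ₁ x s * Complex.exp (Complex.I * (v x : ℂ))) with hg₄
  set g₅ : R3 → ℂ := fun x => ∑ s : Fin 2,
    conj (Ψ₂ x s) * (Ψ₂ x s * Complex.exp (Complex.I * (v x : ℂ))) with hg₅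
  -- measurability of phases
  have meas₁ : Measurable (fun x => Complex.exp (Complex.I * (u x : ℂ))) :=
    Complex.measurable_exp.comp (measurable_const.mul (Complex.measurable_ofReal.comp hu))
  have meas₂ : Measurable (fun x => Complex.exp (Complex.I * (v x : ℂ))) :=
    Complex.measurable_exp.comp (measurable_const.mul (Complex.measurable_ofReal.comp hv))
  have meas₃ : Measurable (fun x => Complex.exp (Complex.I * ((u x : ℂ) + (v x : ℂ)))) :=
    Complex.measurable_exp.comp (measurable_const.mul
      ((Complex.measurable_ofReal.comp hu).add (Complex.measurable_ofReal.comp hv)))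
  -- integrability
  have iT₁ : Integrable T₁ volume :=
    integrable_finset_sum _ fun s _ => my_int_mul (hΨ₁ s) (hΨ₁ s)
  have iT₂ : Integrable T₂ volume :=
    integrable_finset_sum _ fun s _ => my_int_mul (hΨ₂ s) (hΨ₂ s)
  have ig₁ : Integrable g₁ volume :=
    integrable_finset_sum _ fun s _ => my_int_mul_phase (hΨ₁ s) (hΨ₂ s) _
      meas₁.aestronglyMeasurable (fun x => le_of_eq (my_norm_phase (u x)))
  have ig₂ : Integrable g₂ volume :=
    integrable_finset_sum _ fun s _ => my_int_mul_phase (hΨ₁ s) (hΨ₁ s) _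
      meas₂.aestronglyMeasurable (fun x => le_of_eq (my_norm_phase (v x)))
  have ig₃ : Integrable g₃ volume :=
    integrable_finset_sum _ fun s _ => my_int_mul_phase (hΨ₁ s) (hΨ₂ s) _
      meas₃.aestronglyMeasurable (fun x => by
        rw [show ((u x : ℂ) + (v x : ℂ)) = ((u x + v x : ℝ) : ℂ) by push_cast; ring]
        exact le_of_eq (my_norm_phase (u x + v x)))
  have ig₄ : Integrable g₄ volume := by
    refine integrable_finset_sum _ fun s _ => ?_
    have h := my_int_mul_phase (hΨ₂ s) (hΨ₁ s)
      (fun x => conj (Complex.exp (Complex.I * (u x : ℂ))) * Complex.exp (Complex.I * (v x : ℂ)))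
      ((Complex.continuous_conj.comp_aestronglyMeasurable
        meas₁.aestronglyMeasurable).mul meas₂.aestronglyMeasurable)
      (fun x => by
        rw [norm_mul, RCLike.norm_conj, my_norm_phase, my_norm_phase, mul_one])
    exact h.congr (Filter.Eventually.of_forall fun x => by simp only [map_mul]; ring)
  have ig₅ : Integrable g₅ volume :=
    integrable_finset_sum _ fun s _ => my_int_mul_phase (hΨ₂ s) (hΨ₂ s) _
      meas₂.aestronglyMeasurable (fun x => le_of_eq (my_norm_phase (v x)))
  -- values of basic integrals
  have vT₁ : (∫ x, T₁ x) = 1 := by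
    have h : ∀ x, T₁ x = ((∑ s : Fin 2, Complex.normSq (Ψ₁ x s) : ℝ) : ℂ) := by
      intro x
      rw [hT₁]
      push_cast
      exact Finset.sum_congr rfl fun s _ => Complex.normSq_eq_conj_mul_self.symm
    simp only [h]
    have h2 := integral_ofReal (𝕜 := ℂ)
      (f := fun x => ∑ s : Fin 2, Complex.normSq (Ψ₁ x s)) (μ := (volume : Measure R3))
    rw [hn₁] at h2
    simpa using h2
  have vT₂ : (∫ x, T₂ x) = 1 := by
    have h : ∀ x, T₂ x = ((∑ s : Fin 2, Complex.normSq (Ψ₂ x s) : ℝ) : ℂ) := by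
      intro x
      rw [hT₂]
      push_cast
      exact Finset.sum_congr rfl fun s _ => Complex.normSq_eq_conj_mul_self.symm
    simp only [h]
    have h2 := integral_ofReal (𝕜 := ℂ)
      (f := fun x => ∑ s : Fin 2, Complex.normSq (Ψ₂ x s)) (μ := (volume : Measure R3))
    rw [hn₂] at h2
    simpa using h2
  have vg₁ : (∫ x, g₁ x) = 0 := hip₁
  have vg₂ : (∫ x, g₂ x) = 0 := hip₂
  have vg₃ : (∫ x, g₃ x) = 0 := hip₃
  have vg₄ : (∫ x, g₄ x) = 0 := hip₄
  have vg₅ : (∫ x, g₅ x) = 0 := hip₅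
  -- pointwise identities
  have hE : ∀ x : R3, conj (Complex.exp (Complex.I * (u x : ℂ))) *
      Complex.exp (Complex.I * (u x : ℂ)) = 1 := fun x => by
    rw [my_conj_exp]; exact inv_mul_cancel₀ (Complex.exp_ne_zero _)
  have hW : ∀ x : R3, conj (Complex.exp (Complex.I * (v x : ℂ))) *
      Complex.exp (Complex.I * (v x : ℂ)) = 1 := fun x => by
    rw [my_conj_exp]; exact inv_mul_cancel₀ (Complex.exp_ne_zero _)
  have hconjc : conj c = c := by rw [hc]; simp
  have hconja : conj a = a := by rw [ha]; simp
  have hconjb : conj b = b := by rw [hb]; simp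
  have key₁ : ∀ x, (∑ s : Fin 2, conj (Φ₁ x s) * Φ₁ x s) =
      c * c * (a * a) * T₁ x + c * c * (b * b) * T₂ x +
        c * c * (a * b) * g₁ x + c * c * (a * b) * conj (g₁ x) := by
    intro x
    simp only [hΦ₁, hT₁, hT₂, hg₁, Fin.sum_univ_two, map_add, map_mul,
      Complex.conj_conj, hconjc, hconja, hconjb]
    linear_combination (c * c * b * b *
      (conj (Ψ₂ x 0) * Ψ₂ x 0 + conj (Ψ₂ x 1) * Ψ₂ x 1)) * hE x
  have key₂ : ∀ x, (∑ s : Fin 2, conj (Φ₂ x s) * Φ₂ x s) =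
      c * c * (a * a) * T₁ x + c * c * (b * b) * T₂ x -
        c * c * (a * b) * g₁ x - c * c * (a * b) * conj (g₁ x) := by
    intro x
    simp only [hΦ₂, hT₁, hT₂, hg₁, Fin.sum_univ_two, map_add, map_sub, map_mul,
      Complex.conj_conj, hconjc, hconja, hconjb]
    linear_combination
      (c * c * ((a * conj (Ψ₁ x 0) - b * (conj (Ψ₂ x 0) *
          conj (Complex.exp (Complex.I * (u x : ℂ))))) *
        (a * Ψ₁ x 0 - b * (Ψ₂ x 0 * Complex.exp (Complex.I * (u x : ℂ)))) +
        (a * conj (Ψ₁ x 1) - b * (conj (Ψ₂ x 1) *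
          conj (Complex.exp (Complex.I * (u x : ℂ))))) *
        (a * Ψ₁ x 1 - b * (Ψ₂ x 1 * Complex.exp (Complex.I * (u x : ℂ)))))) * hW x +
      (c * c * b * b * (conj (Ψ₂ x 0) * Ψ₂ x 0 + conj (Ψ₂ x 1) * Ψ₂ x 1)) * hE x
  have key₃ : ∀ x, (∑ s : Fin 2, conj (Φ₁ x s) * Φ₂ x s) =
      c * c * (a * a) * g₂ x - c * c * (a * b) * g₃ x +
        c * c * (a * b) * g₄ x - c * c * (b * b) * g₅ x := by
    intro x
    simp only [hΦ₁, hΦ₂, hg₂, hg₃, hg₄, hg₅, Fin.sum_univ_two, map_add, map_sub, map_mul,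
      Complex.conj_conj, hconjc, hconja, hconjb, mul_add, Complex.exp_add]
    linear_combination (-(c * c * b * b *
      (conj (Ψ₂ x 0) * Ψ₂ x 0 + conj (Ψ₂ x 1) * Ψ₂ x 1) *
        Complex.exp (Complex.I * (v x : ℂ)))) * hE x
  have hm' : (mu : ℂ) + (md : ℂ) = 2 := by exact_mod_cast hm
  refine ⟨?_, ?_, ?_, ?_⟩
  · simp_rw [key₁]
    have I12 : Integrable (fun x => c * c * (a * a) * T₁ x + c * c * (b * b) * T₂ x) volume :=
      (iT₁.const_mul _).add (iT₂.const_mul _)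
    have I123 : Integrable (fun x => c * c * (a * a) * T₁ x + c * c * (b * b) * T₂ x +
        c * c * (a * b) * g₁ x) volume := I12.add (ig₁.const_mul _)
    rw [integral_add I123 ((my_int_conj ig₁).const_mul _),
      integral_add I12 (ig₁.const_mul _),
      integral_add (iT₁.const_mul _) (iT₂.const_mul _),
      integral_const_mul, integral_const_mul, integral_const_mul, integral_const_mul,
      integral_conj, vT₁, vT₂, vg₁, hcc, haa, hbb]
    simp only [map_zero, mul_zero, add_zero, mul_one]
    linear_combination (2 : ℂ)⁻¹ * hm'
  · simp_rw [key₂]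
    have I12 : Integrable (fun x => c * c * (a * a) * T₁ x + c * c * (b * b) * T₂ x) volume :=
      (iT₁.const_mul _).add (iT₂.const_mul _)
    have I123 : Integrable (fun x => c * c * (a * a) * T₁ x + c * c * (b * b) * T₂ x -
        c * c * (a * b) * g₁ x) volume := I12.sub (ig₁.const_mul _)
    rw [integral_sub I123 ((my_int_conj ig₁).const_mul _),
      integral_sub I12 (ig₁.const_mul _),
      integral_add (iT₁.const_mul _) (iT₂.const_mul _),
      integral_const_mul, integral_const_mul, integral_const_mul, integral_const_mul,
      integral_conj, vT₁, vT₂, vg₁, hcc, haa, hbb]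
    simp only [map_zero, mul_zero, sub_zero, mul_one]
    linear_combination (2 : ℂ)⁻¹ * hm'
  · simp_rw [key₃]
    have J12 : Integrable (fun x => c * c * (a * a) * g₂ x - c * c * (a * b) * g₃ x) volume :=
      (ig₂.const_mul _).sub (ig₃.const_mul _)
    have J123 : Integrable (fun x => c * c * (a * a) * g₂ x - c * c * (a * b) * g₃ x +
        c * c * (a * b) * g₄ x) volume := J12.add (ig₄.const_mul _)
    rw [integral_sub J123 (ig₅.const_mul _),
      integral_add J12 (ig₄.const_mul _),
      integral_sub (ig₂.const_mul _) (ig₃.const_mul _),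
      integral_const_mul, integral_const_mul, integral_const_mul, integral_const_mul,
      vg₂, vg₃, vg₄, vg₅]
    ring
  · refine Filter.Eventually.of_forall fun x i j => ?_
    have step : Φ₁ x i * conj (Φ₁ x j) + Φ₂ x i * conj (Φ₂ x j) =
        (c * c) * (2 * ((a * a) * (Ψ₁ x i * conj (Ψ₁ x j))) +
          2 * ((b * b) * (Ψ₂ x i * conj (Ψ₂ x j)))) := by
      simp only [hΦ₁, hΦ₂, map_add, map_sub, map_mul, hconjc, hconja, hconjb]
      linear_combination
        (c * c * (a * Ψ₁ x i - b * (Ψ₂ x i * Complex.exp (Complex.I * (u x : ℂ)))) *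
          (a * conj (Ψ₁ x j) - b * (conj (Ψ₂ x j) *
            conj (Complex.exp (Complex.I * (u x : ℂ)))))) * hW x +
        (2 * c * c * b * b * (Ψ₂ x i * conj (Ψ₂ x j))) * hE x
    rw [step, hcc, haa, hbb]
    ring
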